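/- Let f ∈ ℂ(X) be a rational function over ℂ. There exists a rational function g ∈ ℂ(X) with derivative g' = f if and only if for every a ∈ ℂ the residue of f at a (i.e., the coefficient of (X − a)⁻¹ in the partial fraction / Laurent expansion of f at a) is zero. -/

import Mathlib

open Polynomial

/-- The derivative of a rational function f = num/denom, given by the quotient rule. -/
noncomputable def ratDeriv (f : RatFunc ℂ) : RatFunc ℂ :=
  algebraMap (Polynomial ℂ) (RatFunc ℂ)
      (Polynomial.derivative f.num * f.denom - f.num * Polynomial.derivative f.denom) /
    algebraMap (Polynomial ℂ) (RatFunc ℂ) (f.denom ^ 2)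

/-- The residue of a rational function f at a point a ∈ ℂ: the coefficient of X⁻¹ in
the Laurent expansion of f at a (obtained by translating by a and expanding at 0). -/
noncomputable def ratResidue (a : ℂ) (f : RatFunc ℂ) : ℂ :=
  ((RatFunc.laurent a f : RatFunc ℂ) : LaurentSeries ℂ).coeff (-1)

namespace StmtNine

open RatFunc

local notation "A" => algebraMap (Polynomial ℂ) (RatFunc ℂ)

lemma ratDeriv_div (p : ℂ[X]) {q : ℂ[X]} (hq : q ≠ 0) :
    ratDeriv (A p / A q) =
      A (derivative p * q - p * derivative q) / A (q ^ 2) := by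
  set h := A p / A q with hh
  have hd : h.denom ≠ 0 := h.denom_ne_zero
  have key : h.num * q = p * h.denom := by
    have h1 : A h.num / A h.denom = A p / A q := by rw [num_div_denom]
    rw [div_eq_div_iff (algebraMap_ne_zero hd) (algebraMap_ne_zero hq), ← map_mul, ← map_mul] at h1
    exact algebraMap_injective ℂ h1
  have key' := congrArg derivative key
  rw [derivative_mul, derivative_mul] at key'
  show A (derivative h.num * h.denom - h.num * derivative h.denom) / A (h.denom ^ 2) = _
  rw [div_eq_div_iff (algebraMap_ne_zero (pow_ne_zero 2 hd))
      (algebraMap_ne_zero (pow_ne_zero 2 hq)), ← map_mul, ← map_mul]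
  refine congrArg _ ?_
  linear_combination (h.denom * q) * key' - (derivative h.denom * q + h.denom * derivative q) * key

lemma ratDeriv_algebraMap (p : ℂ[X]) : ratDeriv (A p) = A (derivative p) := by
  have := ratDeriv_div p (q := 1) one_ne_zero
  simpa using this

lemma ratDeriv_zero : ratDeriv 0 = 0 := by
  simp [ratDeriv]

lemma ratDeriv_add (f g : RatFunc ℂ) : ratDeriv (f + g) = ratDeriv f + ratDeriv g := by
  have hdf : f.denom ≠ 0 := f.denom_ne_zero
  have hdg : g.denom ≠ 0 := g.denom_ne_zero
  have hsum : f + g = A (f.num * g.denom + f.denom * g.num) / A (f.denom * g.denom) := by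
    rw [map_add, map_mul, map_mul, map_mul, ← div_add_div _ _ (algebraMap_ne_zero hdf)
      (algebraMap_ne_zero hdg), num_div_denom, num_div_denom]
  conv_lhs => rw [hsum]
  conv_rhs => rw [← num_div_denom f, ← num_div_denom g]
  rw [ratDeriv_div _ (mul_ne_zero hdf hdg), ratDeriv_div _ hdf, ratDeriv_div _ hdg,
    div_add_div _ _ (algebraMap_ne_zero (pow_ne_zero 2 hdf))
      (algebraMap_ne_zero (pow_ne_zero 2 hdg)),
    ← map_mul, ← map_mul, ← map_mul, ← map_add,
    div_eq_div_iff (algebraMap_ne_zero (pow_ne_zero 2 (mul_ne_zero hdf hdg)))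
      (algebraMap_ne_zero (mul_ne_zero (pow_ne_zero 2 hdf) (pow_ne_zero 2 hdg))),
    ← map_mul, ← map_mul]
  refine congrArg _ ?_
  simp only [derivative_add, derivative_mul]
  ring

lemma ratResidue_add (a : ℂ) (f g : RatFunc ℂ) :
    ratResidue a (f + g) = ratResidue a f + ratResidue a g := by
  simp [ratResidue, map_add]

/-- Residue as an additive monoid hom. -/
noncomputable def resHom (a : ℂ) : RatFunc ℂ →+ ℂ where
  toFun := ratResidue a
  map_zero' := by simp [ratResidue]
  map_add' f g := ratResidue_add a f g

lemma coe_alg (r : ℂ[X]) :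
    ((A r : RatFunc ℂ) : LaurentSeries ℂ) = ((r : PowerSeries ℂ) : LaurentSeries ℂ) := by
  rw [RatFunc.coe_coe]
  rfl

lemma ratResidue_div_of_eval_ne {a : ℂ} (p : ℂ[X]) {q : ℂ[X]} (hq : q.eval a ≠ 0) :
    ratResidue a (A p / A q) = 0 := by
  have hq0 : q ≠ 0 := fun h => hq (by simp [h])
  unfold ratResidue
  rw [laurent_div, map_div₀, coe_alg, coe_alg]
  set P := taylor a p
  set Q := taylor a q
  have hQc : PowerSeries.constantCoeff (Q : PowerSeries ℂ) ≠ 0 := by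
    rw [← PowerSeries.coeff_zero_eq_constantCoeff_apply, Polynomial.coeff_coe,
      taylor_coeff_zero]
    exact hq
  have hQ0 : ((Q : PowerSeries ℂ) : LaurentSeries ℂ) ≠ 0 := by
    intro h
    apply (mt (Polynomial.coe_eq_zero_iff (φ := Q)).mp) (fun h' => hq0 (taylor_injective a (by rw [map_zero]; exact h')))
    apply HahnSeries.ofPowerSeries_injective (Γ := ℤ)
    rw [map_zero]
    exact h
  have key : ((P : PowerSeries ℂ) : LaurentSeries ℂ) / ((Q : PowerSeries ℂ) : LaurentSeries ℂ)
      = (((P : PowerSeries ℂ) * (Q : PowerSeries ℂ)⁻¹ : PowerSeries ℂ) : LaurentSeries ℂ) := by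
    rw [div_eq_iff hQ0, ← PowerSeries.coe_mul, mul_assoc,
      PowerSeries.inv_mul_cancel _ hQc, mul_one]
  rw [key, PowerSeries.coeff_coe]
  simp

lemma taylor_pow_X_sub_C (a : ℂ) (m : ℕ) :
    taylor a ((Polynomial.X - Polynomial.C a) ^ m) = Polynomial.X ^ m := by
  induction m with
  | zero => simp
  | succ n ih =>
      rw [pow_succ, taylor_mul, ih, pow_succ]
      congr 1
      rw [map_sub, taylor_X, taylor_C]
      ring

lemma ratResidue_div_pow (a : ℂ) (p : ℂ[X]) (k : ℕ) :
    ratResidue a (A p / A ((Polynomial.X - Polynomial.C a) ^ (k + 1)))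
      = (taylor a p).coeff k := by
  unfold ratResidue
  rw [laurent_div, map_div₀, coe_alg, coe_alg, taylor_pow_X_sub_C]
  set P := taylor a p
  have hXpow : (((Polynomial.X ^ (k+1) : ℂ[X]) : PowerSeries ℂ) : LaurentSeries ℂ)
      = HahnSeries.single ((k:ℤ)+1) (1 : ℂ) := by
    push_cast
    rw [PowerSeries.coe_X, HahnSeries.single_pow]
    norm_num
  rw [hXpow]
  have hne : (HahnSeries.single ((k:ℤ)+1) (1 : ℂ)) ≠ 0 := HahnSeries.single_ne_zero one_ne_zero
  have key : ((P : PowerSeries ℂ) : LaurentSeries ℂ) / HahnSeries.single ((k:ℤ)+1) (1:ℂ)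
      = ((P : PowerSeries ℂ) : LaurentSeries ℂ) * HahnSeries.single (-((k:ℤ)+1)) (1:ℂ) := by
    rw [div_eq_iff hne, mul_assoc, HahnSeries.single_mul_single]
    have h0 : (-((k:ℤ)+1) + ((k:ℤ)+1)) = 0 := by ring
    rw [h0, one_mul, HahnSeries.single_zero_one, mul_one]
  rw [key]
  have hidx : (-1 : ℤ) = (k : ℤ) + (-((k:ℤ)+1)) := by ring
  rw [hidx, HahnSeries.coeff_mul_single_add, PowerSeries.coeff_coe]
  simp [Polynomial.coeff_coe]

lemma ratDeriv_pole (c : ℂ) (b : ℂ) (m : ℕ) :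
    ratDeriv (A (Polynomial.C c) / A ((Polynomial.X - Polynomial.C b) ^ (m + 1))) =
      A (Polynomial.C (-((m : ℂ) + 1) * c))
        / A ((Polynomial.X - Polynomial.C b) ^ (m + 2)) := by
  have hXb : (Polynomial.X - Polynomial.C b) ≠ (0:ℂ[X]) := X_sub_C_ne_zero b
  rw [ratDeriv_div _ (pow_ne_zero _ hXb),
    div_eq_div_iff (algebraMap_ne_zero (pow_ne_zero 2 (pow_ne_zero _ hXb)))
      (algebraMap_ne_zero (pow_ne_zero _ hXb)), ← map_mul, ← map_mul]
  refine congrArg _ ?_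
  rw [derivative_C, derivative_pow, derivative_X_sub_C]
  have hC : Polynomial.C (-((m:ℂ)+1) * c)
      = -(Polynomial.C (((m+1 : ℕ)) : ℂ) * Polynomial.C c) := by
    rw [← map_mul, ← map_neg]
    congr 1
    push_cast
    ring
  rw [hC]
  simp only [Nat.add_sub_cancel]
  ring

lemma exists_antideriv (p : ℂ[X]) : ∃ P : ℂ[X], derivative P = p := by
  induction p using Polynomial.induction_on' with
  | add p q hp hq =>
      obtain ⟨P, hP⟩ := hp
      obtain ⟨Q, hQ⟩ := hq
      exact ⟨P + Q, by rw [derivative_add, hP, hQ]⟩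
  | monomial n a =>
      refine ⟨Polynomial.C (a / ((n:ℂ)+1)) * Polynomial.X ^ (n+1), ?_⟩
      rw [derivative_C_mul, derivative_X_pow, Nat.add_sub_cancel, ← mul_assoc, ← map_mul,
        ← C_mul_X_pow_eq_monomial]
      congr 2
      push_cast
      have hne : ((n:ℂ)+1) ≠ 0 := Nat.cast_add_one_ne_zero n
      field_simp

lemma split_step {q : ℂ[X]} (hq : q ≠ 0) (hdeg : 0 < q.natDegree) (p : ℂ[X]) :
    ∃ (b c₀ : ℂ) (m : ℕ) (p1 q1 : ℂ[X]), q1 ≠ 0 ∧ q1.natDegree < q.natDegree ∧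
      A p / A q = A (Polynomial.C c₀) / A ((Polynomial.X - Polynomial.C b) ^ (m+1))
        + A p1 / A q1 := by
  obtain ⟨b, hb⟩ := Complex.exists_root (natDegree_pos_iff_degree_pos.mp hdeg)
  obtain ⟨r, hqe, hnd⟩ := q.exists_eq_pow_rootMultiplicity_mul_and_not_dvd hq b
  have hk : 0 < q.rootMultiplicity b := (rootMultiplicity_pos hq).mpr hb
  obtain ⟨m, hm⟩ : ∃ m, q.rootMultiplicity b = m + 1 := ⟨q.rootMultiplicity b - 1, by omega⟩
  have hrb : r.eval b ≠ 0 := fun h => hnd (dvd_iff_isRoot.mpr h)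
  have hr : r ≠ 0 := fun h => hrb (by simp [h])
  have hXb : (Polynomial.X - Polynomial.C b) ≠ (0:ℂ[X]) := X_sub_C_ne_zero b
  set c₀ := p.eval b / r.eval b with hc₀
  have hvan : IsRoot (p - Polynomial.C c₀ * r) b := by
    simp only [IsRoot, Polynomial.eval_sub, Polynomial.eval_mul, Polynomial.eval_C, hc₀]
    rw [div_mul_cancel₀ _ hrb, sub_self]
  obtain ⟨p1, hp1⟩ := dvd_iff_isRoot.mpr hvan
  refine ⟨b, c₀, m, p1, (Polynomial.X - Polynomial.C b) ^ m * r,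
    mul_ne_zero (pow_ne_zero _ hXb) hr, ?_, ?_⟩
  · have h1 : q.natDegree = (m+1) + r.natDegree := by
      rw [hqe, hm, natDegree_mul (pow_ne_zero _ hXb) hr, natDegree_pow, natDegree_X_sub_C,
        mul_one]
    rw [natDegree_mul (pow_ne_zero _ hXb) hr, natDegree_pow, natDegree_X_sub_C, mul_one]
    omega
  · have hp' : p = Polynomial.C c₀ * r + (Polynomial.X - Polynomial.C b) * p1 := by
      linear_combination hp1
    rw [hqe, hm, hp']
    have h1 : A ((Polynomial.X - Polynomial.C b) ^ (m+1)) ≠ 0 :=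
      algebraMap_ne_zero (pow_ne_zero _ hXb)
    have h2 : A ((Polynomial.X - Polynomial.C b) ^ m * r) ≠ 0 :=
      algebraMap_ne_zero (mul_ne_zero (pow_ne_zero _ hXb) hr)
    have h3 : A ((Polynomial.X - Polynomial.C b) ^ (m+1) * r) ≠ 0 :=
      algebraMap_ne_zero (mul_ne_zero (pow_ne_zero _ hXb) hr)
    rw [div_add_div _ _ h1 h2, div_eq_div_iff h3 (mul_ne_zero h1 h2)]
    simp only [← map_mul, ← map_add]
    refine congrArg _ ?_
    ring

lemma aux1 : ∀ (n : ℕ) (q : ℂ[X]), q ≠ 0 → q.natDegree ≤ n →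
    ∀ (p : ℂ[X]) (a : ℂ), ratResidue a (ratDeriv (A p / A q)) = 0 := by
  intro n
  induction n with
  | zero =>
      intro q hq hdeg p a
      rw [ratDeriv_div p hq]
      apply ratResidue_div_of_eval_ne
      have h0 : q.natDegree = 0 := Nat.le_zero.mp hdeg
      have hqa : q.eval a ≠ 0 := by
        rw [eq_C_of_natDegree_eq_zero h0] at hq ⊢
        simpa using fun h => hq (by rw [h, map_zero])
      simpa [eval_pow] using pow_ne_zero 2 hqa
  | succ n ih =>
      intro q hq hdeg p a
      by_cases hsmall : q.natDegree ≤ n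
      · exact ih q hq hsmall p a
      have hpos : 0 < q.natDegree := by omega
      obtain ⟨b, c₀, m, p1, q1, hq1, hlt, heq⟩ := split_step hq hpos p
      rw [heq, ratDeriv_add, ratResidue_add, ih q1 hq1 (by omega) p1 a, add_zero,
        ratDeriv_pole]
      rcases eq_or_ne a b with rfl | hab
      · rw [show m + 2 = (m+1) + 1 from rfl, ratResidue_div_pow, taylor_C, coeff_C]
        simp
      · apply ratResidue_div_of_eval_ne
        simp only [Polynomial.eval_pow, Polynomial.eval_sub, Polynomial.eval_X, Polynomial.eval_C]
        exact pow_ne_zero _ (sub_ne_zero.mpr hab)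

lemma residue_ratDeriv (g : RatFunc ℂ) (a : ℂ) : ratResidue a (ratDeriv g) = 0 := by
  rw [← RatFunc.num_div_denom g]
  exact aux1 g.denom.natDegree g.denom (RatFunc.denom_ne_zero g) le_rfl g.num a

/-- being a derivative plus a sum of simple poles -/
def Nice (f : RatFunc ℂ) : Prop :=
  ∃ (g : RatFunc ℂ) (c : ℂ →₀ ℂ),
    f = ratDeriv g + c.sum fun b cb =>
      A (Polynomial.C cb) / A (Polynomial.X - Polynomial.C b)

lemma pole_zero (b : ℂ) :
    A (Polynomial.C (0:ℂ)) / A (Polynomial.X - Polynomial.C b) = 0 := by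
  simp

lemma pole_add (b x y : ℂ) :
    A (Polynomial.C (x + y)) / A (Polynomial.X - Polynomial.C b)
      = A (Polynomial.C x) / A (Polynomial.X - Polynomial.C b)
        + A (Polynomial.C y) / A (Polynomial.X - Polynomial.C b) := by
  rw [map_add, map_add, add_div]

lemma nice_add {f₁ f₂ : RatFunc ℂ} (h₁ : Nice f₁) (h₂ : Nice f₂) : Nice (f₁ + f₂) := by
  obtain ⟨g₁, c₁, rfl⟩ := h₁
  obtain ⟨g₂, c₂, rfl⟩ := h₂
  refine ⟨g₁ + g₂, c₁ + c₂, ?_⟩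
  rw [ratDeriv_add, Finsupp.sum_add_index' (fun b => pole_zero b) (fun b x y => pole_add b x y)]
  abel

lemma nice_deriv (g : RatFunc ℂ) : Nice (ratDeriv g) :=
  ⟨g, 0, by simp⟩

lemma nice_pole (b c₀ : ℂ) :
    Nice (A (Polynomial.C c₀) / A (Polynomial.X - Polynomial.C b)) := by
  refine ⟨0, Finsupp.single b c₀, ?_⟩
  rw [ratDeriv_zero, Finsupp.sum_single_index (pole_zero b), zero_add]

lemma aux2 : ∀ (n : ℕ) (q : ℂ[X]), q ≠ 0 → q.natDegree ≤ n →
    ∀ (p : ℂ[X]), Nice (A p / A q) := by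
  intro n
  induction n with
  | zero =>
      intro q hq hdeg p
      have h0 : q.natDegree = 0 := Nat.le_zero.mp hdeg
      set u := q.coeff 0 with hu
      have hqC : q = Polynomial.C u := eq_C_of_natDegree_eq_zero h0
      have hu0 : u ≠ 0 := fun h => hq (by rw [hqC, h, map_zero])
      obtain ⟨P, hP⟩ := exists_antideriv (Polynomial.C u⁻¹ * p)
      have key : A p / A q = ratDeriv (A P) := by
        rw [ratDeriv_algebraMap, hP, hqC, div_eq_iff (algebraMap_ne_zero
          (fun h => hu0 (Polynomial.C_eq_zero.mp h))), ← map_mul]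
        refine congrArg _ ?_
        rw [mul_comm (Polynomial.C u⁻¹) p, mul_assoc, ← map_mul, inv_mul_cancel₀ hu0, map_one,
          mul_one]
      rw [key]
      exact nice_deriv _
  | succ n ih =>
      intro q hq hdeg p
      by_cases hsmall : q.natDegree ≤ n
      · exact ih q hq hsmall p
      have hpos : 0 < q.natDegree := by omega
      obtain ⟨b, c₀, m, p1, q1, hq1, hlt, heq⟩ := split_step hq hpos p
      rw [heq]
      refine nice_add ?_ (ih q1 hq1 (by omega) p1)
      match m with
      | 0 => simpa using nice_pole b c₀
      | (j+1) =>
          have hj : ((j:ℂ)+1) ≠ 0 := Nat.cast_add_one_ne_zero j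
          have key : A (Polynomial.C c₀) / A ((Polynomial.X - Polynomial.C b) ^ (j+1+1))
              = ratDeriv (A (Polynomial.C (-c₀ / ((j:ℂ)+1)))
                  / A ((Polynomial.X - Polynomial.C b) ^ (j+1))) := by
            rw [ratDeriv_pole]
            congr 2
            field_simp
          rw [key]
          exact nice_deriv _

end StmtNine

/-- A rational function over ℂ has a rational antiderivative if and only if all of
its residues vanish. -/
theorem stmt9 (f : RatFunc ℂ) :
    (∃ g : RatFunc ℂ, ratDeriv g = f) ↔ ∀ a : ℂ, ratResidue a f = 0 := by
  classical
  open StmtNine in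
  constructor
  · rintro ⟨g, rfl⟩ a
    exact residue_ratDeriv g a
  · intro h
    obtain ⟨g, c, hf⟩ := aux2 f.denom.natDegree f.denom (RatFunc.denom_ne_zero f) le_rfl f.num
    rw [RatFunc.num_div_denom] at hf
    have hres : ∀ b : ℂ, c b = 0 := by
      intro b
      have h1 : ratResidue b f = 0 := h b
      rw [hf, ratResidue_add, residue_ratDeriv, zero_add] at h1
      have h2 : ratResidue b (c.sum fun b' cb =>
          algebraMap (Polynomial ℂ) (RatFunc ℂ) (Polynomial.C cb)
            / algebraMap (Polynomial ℂ) (RatFunc ℂ) (Polynomial.X - Polynomial.C b'))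
          = c.sum fun b' cb => if b' = b then cb else 0 := by
        rw [show (ratResidue b) = ⇑(resHom b) from rfl, map_finsuppSum]
        refine Finsupp.sum_congr ?_
        intro b' _
        show ratResidue b _ = _
        rcases eq_or_ne b' b with rfl | hne
        · rw [if_pos rfl]
          have hpow : (Polynomial.X - Polynomial.C b' : ℂ[X])
              = (Polynomial.X - Polynomial.C b') ^ (0+1) := by rw [pow_one]
          rw [hpow, ratResidue_div_pow]
          simp [taylor_C]
        · rw [if_neg hne]
          apply ratResidue_div_of_eval_ne
          simp only [eval_sub, eval_X, eval_C]
          exact sub_ne_zero.mpr (Ne.symm hne)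
      rw [h2, Finsupp.sum_ite_eq' c b (fun _ cb => cb)] at h1
      by_cases hb : b ∈ c.support
      · rwa [if_pos hb] at h1
      · exact Finsupp.notMem_support_iff.mp hb
    have hc0 : c = 0 := Finsupp.ext hres
    refine ⟨g, ?_⟩
    rw [hf, hc0, Finsupp.sum_zero_index, add_zero]
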